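/- (Theorem 1, mean readout) Let F be a real vector space, let F' be a type, and let (agg_k : Multiset F → F', comb_k : F × F' → F) for k = 1, …, K be a sequence of GNN layers. Fix initial values h_b, h_w ∈ F. For an N-family graph G with initial features h_b on black and h_w on white vertices, let h^{(k)} denote the feature assignment after applying layers Φ_1, …, Φ_k, and let the mean readout at layer k be h_G^{(k)} = (1/|V|) · Σ_{v ∈ V} h^{(k)}(v). Then for every k, h_G^{(k)} = (h_b^{(k)} + h_w^{(k)})/2, where h_b^{(k)}, h_w^{(k)} are defined by the recursion h_b^{(k)} = comb_k(h_b^{(k-1)}, agg_k({h_b^{(k-1)}, h_w^{(k-1)}, h_w^{(k-1)}})), h_w^{(k)} = comb_k(h_w^{(k-1)}, agg_k({h_b^{(k-1)}, h_b^{(k-1)}})) with h_b^{(0)} = h_b, h_w^{(0)} = h_w. Consequently, for any two graphs G₁ (an N₁-family graph) and G₂ (an N₂-family graph) with the same initial values h_b, h_w and the same layers, the tuples (h_{G₁}^{(0)}, h_{G₁}^{(1)}, …, h_{G₁}^{(K)}) and (h_{G₂}^{(0)}, h_{G₂}^{(1)}, …, h_{G₂}^{(K)}) are equal; i.e., the concatenated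 graph representation with mean readout is the same constant for every graph in the family, regardless of the aggregators and combine functions. -/

import Mathlib

/-- `G` together with the 2-coloring `black` (black = `true`, white = `false`) is an
`N`-family graph: exactly `2N` black and `2N` white vertices, every white vertex has
exactly two neighbors, both black, and every black vertex has exactly three neighbors,
exactly two white and exactly one black. -/
def IsNFamily {V : Type*} [Fintype V] (G : SimpleGraph V) (black : V → Bool) (N : ℕ) : Prop :=
  {v : V | black v = true}.ncard = 2 * N ∧
  {v : V | black v = false}.ncard = 2 * N ∧
  (∀ v : V, black v = false →
    (G.neighborSet v).ncard = 2 ∧ ∀ u ∈ G.neighborSet v, black u = true) ∧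
  (∀ v : V, black v = true →
    (G.neighborSet v).ncard = 3 ∧
    {u ∈ G.neighborSet v | black u = false}.ncard = 2 ∧
    {u ∈ G.neighborSet v | black u = true}.ncard = 1)

/-- The multiset of feature values of the neighbors of `v` under the feature map `f`. -/
def neighborFeatures {V : Type*} [Fintype V] (G : SimpleGraph V) [DecidableRel G.Adj]
    {F : Type*} (f : V → F) (v : V) : Multiset F :=
  (G.neighborFinset v).val.map f

/-- The feature assignment obtained from the initial features `f0` by applying the GNN
layers `Φ_1, …, Φ_k` in order, where layer `Φ_{k+1}` has 1-hop neighborhood aggregator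
`agg k` and combine function `comb k`. -/
def gnnIter {V : Type*} [Fintype V] (G : SimpleGraph V) [DecidableRel G.Adj]
    {F F' : Type*} (agg : ℕ → Multiset F → F') (comb : ℕ → F × F' → F)
    (f0 : V → F) : ℕ → V → F
  | 0 => f0
  | k + 1 => fun v =>
      comb k (gnnIter G agg comb f0 k v, agg k (neighborFeatures G (gnnIter G agg comb f0 k) v))

/-- The graph-independent recursion for the black (first component) and white (second
component) feature values. -/
def colorSeq {F F' : Type*} (agg : ℕ → Multiset F → F') (comb : ℕ → F × F' → F)
    (hb hw : F) : ℕ → F × F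
  | 0 => (hb, hw)
  | k + 1 =>
      let p := colorSeq agg comb hb hw k
      (comb k (p.1, agg k ({p.1, p.2, p.2} : Multiset F)),
       comb k (p.2, agg k ({p.1, p.1} : Multiset F)))

/-- The mean readout of the feature assignment `f` on the finite vertex type `V`:
`(1/|V|) • ∑_{v ∈ V} f v`. -/
noncomputable def meanReadout {V : Type*} [Fintype V] {F : Type*} [AddCommGroup F] [Module ℝ F]
    (f : V → F) : F :=
  ((Fintype.card V : ℝ)⁻¹) • ∑ v : V, f v

lemma multiset_map_const {α β : Type*} (t : Multiset α) (c : β) (f : α → β) (n : ℕ)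
    (hc : Multiset.card t = n) (h : ∀ a ∈ t, f a = c) :
    t.map f = Multiset.replicate n c := by
  rw [Multiset.eq_replicate]
  refine ⟨by simpa using hc, ?_⟩
  intro b hbb
  obtain ⟨a, ha, rfl⟩ := Multiset.mem_map.mp hbb
  exact h a ha

lemma gnn_color {V : Type*} [Fintype V] (G : SimpleGraph V) [DecidableRel G.Adj]
    {F F' : Type*} (agg : ℕ → Multiset F → F') (comb : ℕ → F × F' → F)
    (hb hw : F) (black : V → Bool) (N : ℕ) (h : IsNFamily G black N)
    (f : V → F) (hfb : ∀ v, black v = true → f v = hb)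
    (hfw : ∀ v, black v = false → f v = hw) :
    ∀ k v, gnnIter G agg comb f k v =
      if black v then (colorSeq agg comb hb hw k).1 else (colorSeq agg comb hb hw k).2 := by
  classical
  intro k
  induction k with
  | zero =>
    intro v
    cases hv : black v with
    | false => simpa [gnnIter, colorSeq, hv] using hfw v hv
    | true => simpa [gnnIter, colorSeq, hv] using hfb v hv
  | succ k ih =>
    intro v
    set p := colorSeq agg comb hb hw k with hp
    have hcoe : ∀ (P : V → Prop) [DecidablePred P],
        (((G.neighborFinset v).filter P : Finset V) : Set V)
          = {u ∈ G.neighborSet v | P u} := by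
      intro P _
      ext u
      simp [SimpleGraph.mem_neighborFinset]
    cases hv : black v with
    | true =>
      have h3 := (h.2.2.2 v hv)
      have hw2 : ((G.neighborFinset v).filter (fun u => black u = false)).card = 2 := by
        rw [← Set.ncard_coe_finset, hcoe]
        exact h3.2.1
      have hb1 : ((G.neighborFinset v).filter (fun u => black u = true)).card = 1 := by
        rw [← Set.ncard_coe_finset, hcoe]
        exact h3.2.2
      have hnf : neighborFeatures G (gnnIter G agg comb f k) v = {p.1, p.2, p.2} := by
        unfold neighborFeatures
        have hsplit : (G.neighborFinset v).val
            = ((G.neighborFinset v).filter (fun u => black u = true)).val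
              + ((G.neighborFinset v).filter (fun u => black u = false)).val := by
          conv_lhs => rw [← Multiset.filter_add_not (fun u => black u = true)
            (G.neighborFinset v).val]
          rw [Finset.filter_val, Finset.filter_val]
          congr 1
          apply Multiset.filter_congr
          intro x _
          simp
        rw [hsplit, Multiset.map_add]
        have h1 : (((G.neighborFinset v).filter (fun u => black u = true)).val).map
            (gnnIter G agg comb f k) = Multiset.replicate 1 p.1 := by
          apply multiset_map_const
          · exact hb1
          · intro a ha
            rw [Finset.mem_val, Finset.mem_filter] at ha
            rw [ih a, if_pos ha.2]
        have h2 : (((G.neighborFinset v).filter (fun u => black u = false)).val).map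
            (gnnIter G agg comb f k) = Multiset.replicate 2 p.2 := by
          apply multiset_map_const
          · exact hw2
          · intro a ha
            rw [Finset.mem_val, Finset.mem_filter] at ha
            rw [ih a, if_neg (by simp [ha.2])]
        rw [h1, h2]
        rfl
      simp only [gnnIter, hnf, ih v, hv, if_true]
      simp [colorSeq, ← hp]
    | false =>
      have h2 := h.2.2.1 v hv
      have hcard : Multiset.card (G.neighborFinset v).val = 2 := by
        have : (G.neighborFinset v).card = 2 := by
          rw [← Set.ncard_coe_finset]
          have : ((G.neighborFinset v : Finset V) : Set V) = G.neighborSet v := by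
            ext u; simp [SimpleGraph.mem_neighborFinset]
          rw [this]; exact h2.1
        simpa using this
      have hnf : neighborFeatures G (gnnIter G agg comb f k) v = {p.1, p.1} := by
        unfold neighborFeatures
        have : (G.neighborFinset v).val.map (gnnIter G agg comb f k)
            = Multiset.replicate 2 p.1 := by
          apply multiset_map_const _ _ _ _ hcard
          intro a ha
          have hmem : a ∈ G.neighborSet v := by
            simpa [SimpleGraph.mem_neighborFinset] using ha
          rw [ih a, if_pos (h2.2 a hmem)]
        rw [this]; rfl
      simp only [gnnIter, hnf, ih v, hv, if_neg]
      simp [colorSeq, ← hp]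

lemma nfamily_mean {V : Type*} [Fintype V] (G : SimpleGraph V) [DecidableRel G.Adj]
    {F F' : Type*} [AddCommGroup F] [Module ℝ F]
    (agg : ℕ → Multiset F → F') (comb : ℕ → F × F' → F)
    (hb hw : F) (black : V → Bool) (N : ℕ) (hN : 1 ≤ N) (h : IsNFamily G black N)
    (f : V → F) (hfb : ∀ v, black v = true → f v = hb)
    (hfw : ∀ v, black v = false → f v = hw) (k : ℕ) :
    meanReadout (gnnIter G agg comb f k) =
      ((2 : ℝ)⁻¹) • ((colorSeq agg comb hb hw k).1 + (colorSeq agg comb hb hw k).2) := by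
  classical
  set p := colorSeq agg comb hb hw k with hp
  have hkey := gnn_color G agg comb hb hw black N h f hfb hfw k
  have hcb : (Finset.univ.filter (fun v : V => black v = true)).card = 2 * N := by
    rw [← Set.ncard_coe_finset]
    have : ((Finset.univ.filter (fun v : V => black v = true) : Finset V) : Set V)
        = {v : V | black v = true} := by ext v; simp
    rw [this]; exact h.1
  have hcw : (Finset.univ.filter (fun v : V => ¬ black v = true)).card = 2 * N := by
    rw [← Set.ncard_coe_finset]
    have : ((Finset.univ.filter (fun v : V => ¬ black v = true) : Finset V) : Set V)
        = {v : V | black v = false} := by ext v; simp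
    rw [this]; exact h.2.1
  have hcardV : (Fintype.card V : ℝ) = 4 * N := by
    have := Finset.card_filter_add_card_filter_not
      (s := (Finset.univ : Finset V)) (p := fun v : V => black v = true)
    rw [hcb, hcw, Finset.card_univ] at this
    have : Fintype.card V = 4 * N := by omega
    rw [this]; push_cast; ring
  have hsum : ∑ v : V, gnnIter G agg comb f k v = (2 * N) • p.1 + (2 * N) • p.2 := by
    calc ∑ v : V, gnnIter G agg comb f k v
        = ∑ v : V, (if black v then p.1 else p.2) := by
          exact Finset.sum_congr rfl (fun v _ => hkey v)
      _ = (2 * N) • p.1 + (2 * N) • p.2 := by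
          rw [Finset.sum_ite, Finset.sum_const, Finset.sum_const, hcb, hcw]
  have hN0 : (N : ℝ) ≠ 0 := Nat.cast_ne_zero.mpr (by omega)
  rw [meanReadout, hsum, hcardV, smul_add, smul_add]
  rw [← Nat.cast_smul_eq_nsmul ℝ, ← Nat.cast_smul_eq_nsmul ℝ, smul_smul, smul_smul]
  congr 2 <;> push_cast <;> field_simp <;> ring

/-- Theorem 1 (mean readout): for an `N`-family graph with initial features `h_b` on
black and `h_w` on white vertices, the mean readout after `k` GNN layers equals
`(h_b^{(k)} + h_w^{(k)})/2` for every `0 ≤ k ≤ K`. Consequently, any two family graphs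
`G₁` (an `N₁`-family graph) and `G₂` (an `N₂`-family graph) with the same initial values
and the same layers have identical mean readouts at every layer, regardless of the
aggregators and combine functions. -/
theorem nfamily_meanReadout {F : Type*} [AddCommGroup F] [Module ℝ F] {F' : Type*}
    (agg : ℕ → Multiset F → F') (comb : ℕ → F × F' → F) (hb hw : F) (K : ℕ)
    {V₁ : Type*} [Fintype V₁] (G₁ : SimpleGraph V₁) [DecidableRel G₁.Adj]
    (black₁ : V₁ → Bool) (N₁ : ℕ) (hN₁ : 1 ≤ N₁) (h₁ : IsNFamily G₁ black₁ N₁)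
    (f₁ : V₁ → F) (hf₁b : ∀ v, black₁ v = true → f₁ v = hb)
    (hf₁w : ∀ v, black₁ v = false → f₁ v = hw)
    {V₂ : Type*} [Fintype V₂] (G₂ : SimpleGraph V₂) [DecidableRel G₂.Adj]
    (black₂ : V₂ → Bool) (N₂ : ℕ) (hN₂ : 1 ≤ N₂) (h₂ : IsNFamily G₂ black₂ N₂)
    (f₂ : V₂ → F) (hf₂b : ∀ v, black₂ v = true → f₂ v = hb)
    (hf₂w : ∀ v, black₂ v = false → f₂ v = hw) :
    (∀ k ≤ K, meanReadout (gnnIter G₁ agg comb f₁ k) =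
      ((2 : ℝ)⁻¹) • ((colorSeq agg comb hb hw k).1 + (colorSeq agg comb hb hw k).2)) ∧
    (∀ k ≤ K, meanReadout (gnnIter G₁ agg comb f₁ k) =
      meanReadout (gnnIter G₂ agg comb f₂ k)) := by
  constructor
  · intro k _
    exact nfamily_mean G₁ agg comb hb hw black₁ N₁ hN₁ h₁ f₁ hf₁b hf₁w k
  · intro k _
    rw [nfamily_mean G₁ agg comb hb hw black₁ N₁ hN₁ h₁ f₁ hf₁b hf₁w k,
        nfamily_mean G₂ agg comb hb hw black₂ N₂ hN₂ h₂ f₂ hf₂b hf₂w k]
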